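/- For every n ≥ 1, the difference of consecutive block densities satisfies d_{n+1} − d_n = (δ_n − d_n)·(1 − 2·d_n) / (3 − 2·d_n), where d_n = c_n/L_n and δ_n = o_n/m_n are real numbers. -/
import Mathlib


/-- Generation operator: expand a run-length vector `R` starting with symbol `s`,
alternating between `s` and `4 - s` from run to run. -/
def G : List ℕ → ℕ → List ℕ
  | [], _ => []
  | r :: rs, s => List.replicate r s ++ G rs (4 - s)

/-- Pillar sequences: `P 1 = [3]`, `P (n+1) = G (P n) 3` for `n ≥ 1`. -/
def P : ℕ → List ℕ
  | 0 => []
  | 1 => [3]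
  | n + 2 => G (P (n + 1)) 3

/-- Block sequences: `B 1 = G [1,3,3,3,1] 1`, `B (n+1) = B n ++ P n ++ B n` for `n ≥ 1`. -/
def B : ℕ → List ℕ
  | 0 => []
  | 1 => G [1, 3, 3, 3, 1] 1
  | n + 2 => B (n + 1) ++ P (n + 1) ++ B (n + 1)

lemma G_length (R : List ℕ) (s : ℕ) : (G R s).length = R.sum := by
  induction R generalizing s with
  | nil => rfl
  | cons r rs ih => simp [G, ih]

lemma G_mem (R : List ℕ) (s : ℕ) (hs : s = 1 ∨ s = 3) :
    ∀ x ∈ G R s, x = 1 ∨ x = 3 := by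
  induction R generalizing s with
  | nil => simp [G]
  | cons r rs ih =>
    intro x hx
    simp only [G, List.mem_append] at hx
    rcases hx with h | h
    · rcases List.eq_of_mem_replicate h with rfl; exact hs
    · exact ih (4 - s) (by omega) x h

lemma sum_count (l : List ℕ) (h : ∀ x ∈ l, x = 1 ∨ x = 3) :
    l.sum + 2 * l.count 1 = 3 * l.length := by
  induction l with
  | nil => rfl
  | cons a l ih =>
    have ha := h a (by simp)
    have ih' := ih (fun x hx => h x (by simp [hx]))
    rcases ha with rfl | rfl <;>
      simp [List.count_cons, List.sum_cons] <;> omega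

lemma P_mem : ∀ n, ∀ x ∈ P n, x = 1 ∨ x = 3
  | 0 => by simp [P]
  | 1 => by simp [P]
  | n + 2 => G_mem (P (n + 1)) 3 (Or.inr rfl)

lemma P_len_pos : ∀ n, 1 ≤ n → 1 ≤ (P n).length
  | 0, h => by omega
  | 1, _ => by simp [P]
  | n + 2, _ => by
    have h1 := P_len_pos (n + 1) (by omega)
    have h2 := sum_count (P (n + 1)) (P_mem (n + 1))
    have h3 := List.count_le_length (l := P (n + 1)) (a := 1)
    simp only [P, G_length]
    omega

lemma key : ∀ n, 1 ≤ n → (B n).length = (P n).length + 2 * (B n).count 1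
  | 0, h => by omega
  | 1, _ => by decide
  | n + 2, _ => by
    have ih := key (n + 1) (by omega)
    have h2 := sum_count (P (n + 1)) (P_mem (n + 1))
    have h3 := List.count_le_length (l := P (n + 1)) (a := 1)
    simp only [B, P, G_length, List.length_append, List.count_append]
    omega

lemma density_alg (c o m : ℝ) (hc : 0 ≤ c) (hm : 0 < m) :
    (2*c+o)/(2*(m+2*c)+m) - c/(m+2*c) =
      (o/m - c/(m+2*c))*(1-2*(c/(m+2*c)))/(3-2*(c/(m+2*c))) := by
  have h1 : m + 2*c > 0 := by linarith
  have h3 : 3 - 2*(c/(m+2*c)) = (3*m+4*c)/(m+2*c) := by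
    field_simp; ring
  have h4 : 3*m + 4*c > 0 := by linarith
  rw [h3]
  field_simp
  ring

/-- For every `n ≥ 1`, the consecutive block densities satisfy
`d (n+1) − d n = (δ n − d n)(1 − 2 d n) / (3 − 2 d n)`. -/
theorem density_difference :
    ∀ n : ℕ, 1 ≤ n →
      ((B (n + 1)).count 1 : ℝ) / ((B (n + 1)).length : ℝ) -
        ((B n).count 1 : ℝ) / ((B n).length : ℝ) =
      ((((P n).count 1 : ℝ) / ((P n).length : ℝ)) -
          ((B n).count 1 : ℝ) / ((B n).length : ℝ)) *
        (1 - 2 * (((B n).count 1 : ℝ) / ((B n).length : ℝ))) /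
        (3 - 2 * (((B n).count 1 : ℝ) / ((B n).length : ℝ))) := by
  intro n hn
  obtain ⟨k, rfl⟩ : ∃ k, n = k + 1 := ⟨n - 1, by omega⟩
  have hB : B (k + 2) = B (k + 1) ++ P (k + 1) ++ B (k + 1) := rfl
  have hkey := key (k + 1) (by omega)
  have hmpos := P_len_pos (k + 1) (by omega)
  set c : ℝ := ((B (k + 1)).count 1 : ℝ) with hc
  set o : ℝ := ((P (k + 1)).count 1 : ℝ) with ho
  set m : ℝ := ((P (k + 1)).length : ℝ) with hm
  set L : ℝ := ((B (k + 1)).length : ℝ) with hL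
  have hcount : ((B (k + 2)).count 1 : ℝ) = 2 * c + o := by
    rw [hB]; push_cast [List.count_append]; ring
  have hlen : ((B (k + 2)).length : ℝ) = 2 * L + m := by
    rw [hB]; push_cast [List.length_append]; ring
  have hLm : L = m + 2 * c := by
    rw [hL, hm, hc]; exact_mod_cast congrArg (Nat.cast : ℕ → ℝ) hkey
  have hcnn : 0 ≤ c := by positivity
  have hm1 : (0 : ℝ) < m := by rw [hm]; exact_mod_cast hmpos
  rw [hcount, hlen, hLm]
  exact density_alg c o m hcnn hm1
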